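/- Let (X,d) be a metric space whose underlying set X is finite with |X| = n ≥ 2, and suppose (X,d) satisfies the tie-breaking rule. Then (X,d) satisfies the three-point condition if and only if there exists an enumeration x₁, x₂, …, x_n of X (a bijection from {1,…,n} to X) such that for all 1 ≤ i ≤ j ≤ n, d(xᵢ, x_j) = ∑_{k=i}^{j−1} d(x_k, x_{k+1}); moreover, in that case d(x₁, x_n) = max{d(u,v) : u,v ∈ X}, i.e., the endpoints of the realising path are the two farthest points of X. -/

import Mathlib

private lemma nat_telescope (G : ℕ → ℝ) (a b : ℕ) (h : a ≤ b) :
    ∑ k ∈ Finset.Ico a b, (G (k+1) - G k) = G b - G a := by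
  induction b, h using Nat.le_induction with
  | base => simp
  | succ b hb ih => rw [Finset.sum_Ico_succ_top hb, ih]; ring

private lemma fin_telescope {n : ℕ} (h1 : 1 < n) (F : Fin n → ℝ) (i j : Fin n) (h : i ≤ j) :
    ∑ k ∈ Finset.Ico i j, (F (k + ⟨1, h1⟩) - F k) = F j - F i := by
  set G : ℕ → ℝ := fun m => F ⟨m % n, Nat.mod_lt _ (by omega)⟩ with hGdef
  have hG : ∀ k : Fin n, G k.val = F k := fun k =>
    congrArg F (Fin.ext (Nat.mod_eq_of_lt k.isLt))
  have hG' : ∀ k : Fin n, G (k.val + 1) = F (k + ⟨1, h1⟩) :=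
    fun k => (congrArg F (Fin.ext (by rw [Fin.add_def]))).symm
  calc ∑ k ∈ Finset.Ico i j, (F (k + ⟨1, h1⟩) - F k)
      = ∑ m ∈ Finset.Ico (i : ℕ) (j : ℕ), (G (m+1) - G m) := by
        rw [← Fin.map_valEmbedding_Ico, Finset.sum_map]
        exact Finset.sum_congr rfl fun k _ => by
          rw [Fin.valEmbedding_apply, hG k, hG' k]
    _ = G j.val - G i.val := nat_telescope G _ _ h
    _ = F j - F i := by rw [hG, hG]

private lemma real_tpc (p q r : ℝ) :
    max |p - q| (max |q - r| |r - p|) = (|p - q| + |q - r| + |r - p|) / 2 := by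
  rcases abs_cases (p - q) with ⟨h1, h1'⟩ | ⟨h1, h1'⟩ <;>
  rcases abs_cases (q - r) with ⟨h2, h2'⟩ | ⟨h2, h2'⟩ <;>
  rcases abs_cases (r - p) with ⟨h3, h3'⟩ | ⟨h3, h3'⟩ <;>
  simp only [max_def] <;> split_ifs <;> linarith

/-- The tie-breaking rule: distances of distinct unordered pairs are distinct. -/
def TieBreakingRule (X : Type*) [MetricSpace X] : Prop :=
  ∀ x y u v : X, x ≠ y → u ≠ v → ({x, y} : Set X) ≠ {u, v} → dist x y ≠ dist u v

/-- The three-point condition. -/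
def ThreePointCondition (X : Type*) [MetricSpace X] : Prop :=
  ∀ x y z : X, max (dist x y) (max (dist y z) (dist z x)) =
    (dist x y + dist y z + dist z x) / 2

private lemma tpc_of_embedding {X : Type*} [MetricSpace X] (f : X → ℝ)
    (hf : ∀ x y : X, dist x y = |f x - f y|) : ThreePointCondition X := by
  intro x y z
  rw [hf x y, hf y z, hf z x]
  exact real_tpc (f x) (f y) (f z)

private lemma tpc_cases {X : Type*} [MetricSpace X] (htpc : ThreePointCondition X)
    (x y z : X) :
    dist x y = dist y z + dist z x ∨ dist y z = dist x y + dist z x ∨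
      dist z x = dist x y + dist y z := by
  have h := htpc x y z
  rcases max_choice (dist x y) (max (dist y z) (dist z x)) with h1 | h1 <;> rw [h1] at h
  · left; linarith
  · rcases max_choice (dist y z) (dist z x) with h2 | h2 <;> rw [h2] at h
    · right; left; linarith
    · right; right; linarith

/-- Under the tie-breaking rule, a finite metric space on `n ≥ 2` points satisfies the
three-point condition iff there is an enumeration `e` of `X` along which all distances
decompose as sums of consecutive distances; moreover the endpoints of such an
enumeration are the two farthest points of `X`. -/
theorem threePointCondition_iff_spanning_path
    {X : Type*} [MetricSpace X] [Fintype X] (n : ℕ) (hn : 2 ≤ n)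
    (hcard : Fintype.card X = n) (htie : TieBreakingRule X) :
    (ThreePointCondition X ↔
      ∃ e : Fin n ≃ X, ∀ i j : Fin n, i ≤ j →
        dist (e i) (e j) = ∑ k ∈ Finset.Ico i j, dist (e k) (e (k + ⟨1, by omega⟩))) ∧
    (∀ e : Fin n ≃ X,
      (∀ i j : Fin n, i ≤ j →
        dist (e i) (e j) = ∑ k ∈ Finset.Ico i j, dist (e k) (e (k + ⟨1, by omega⟩))) →
      ∀ u v : X, dist u v ≤ dist (e ⟨0, by omega⟩) (e ⟨n - 1, by omega⟩)) := by
  have h1n : 1 < n := by omega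
  constructor
  · constructor
    · -- TPC → enumeration
      intro htpc
      -- a maximizing pair
      obtain ⟨x0, y0, hxy0⟩ : ∃ x y : X, x ≠ y :=
        Fintype.exists_pair_of_one_lt_card (by omega)
      haveI : Nonempty X := Fintype.card_pos_iff.mp (by omega)
      obtain ⟨⟨a, b⟩, hab⟩ := Finite.exists_max (fun p : X × X => dist p.1 p.2)
      have hD : ∀ u v : X, dist u v ≤ dist a b := fun u v => hab (u, v)
      have hane : a ≠ b := by
        intro h
        have h2 := hD x0 y0
        rw [h, dist_self] at h2
        exact absurd h2 (not_le.mpr (dist_pos.mpr hxy0))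
      set f : X → ℝ := fun x => dist a x with hfdef
      have key2 : ∀ x : X, dist a x + dist x b = dist a b := by
        intro x
        have h := tpc_cases htpc a x b
        have h1 := hD a x
        have h2 := hD x b
        have e1 : dist b a = dist a b := dist_comm b a
        have n1 : (0:ℝ) ≤ dist a x := dist_nonneg
        have n2 : (0:ℝ) ≤ dist x b := dist_nonneg
        rcases h with h | h | h <;> linarith
      have hiso : ∀ x y : X, dist x y = |f x - f y| := by
        intro x y
        rcases eq_or_ne x y with hxy | hxy
        · simp [hxy]
        have n0 : (0:ℝ) ≤ dist x y := dist_nonneg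
        rcases eq_or_ne x a with hx | hx
        · rw [hx, hfdef]
          simp [dist_self, abs_of_nonneg dist_nonneg]
        rcases eq_or_ne y a with hy | hy
        · rw [hy, hfdef]
          simp [dist_self, abs_of_nonneg dist_nonneg, dist_comm]
        have c1 : dist y a = dist a y := dist_comm y a
        have c2 : f x = dist a x := rfl
        have c3 : f y = dist a y := rfl
        rcases tpc_cases htpc x y a with h | h | h
        · -- dist x y = f y + f x : the bad case
          exfalso
          have k1 := key2 x
          have k2 := key2 y
          have c4 : dist y b = dist b y := dist_comm y b
          have c5 : dist b x = dist x b := dist_comm b x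
          rcases tpc_cases htpc x y b with h' | h' | h'
          · -- dist x y = dist a b, contradict tie-breaking
            have hsets : ({x, y} : Set X) ≠ {a, b} := by
              intro hs
              have : a ∈ ({x, y} : Set X) := by rw [hs]; exact Set.mem_insert a {b}
              rcases this with h'' | h'' <;> simp_all
            exact htie x y a b hxy hane hsets (by linarith)
          · exact hy (dist_eq_zero.mp (by linarith)).symm
          · exact hx (dist_eq_zero.mp (by linarith)).symm
        · rw [abs_of_nonpos (by linarith)]; linarith
        · rw [abs_of_nonneg (by linarith)]; linarith
      have hinj : Function.Injective f := by
        intro x y h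
        have h2 := hiso x y
        rw [h, sub_self, abs_zero] at h2
        exact dist_eq_zero.mp h2
      letI : LinearOrder X := LinearOrder.lift' f hinj
      have hle : ∀ x y : X, x ≤ y ↔ f x ≤ f y := fun _ _ => Iff.rfl
      set E : Fin n ≃o X := monoEquivOfFin X hcard with hEdef
      refine ⟨E.toEquiv, fun i j hij => ?_⟩
      have hdd : ∀ i j : Fin n, i ≤ j → dist (E i) (E j) = f (E j) - f (E i) := by
        intro i j hij
        have hm : f (E i) ≤ f (E j) := (hle _ _).mp (E.monotone hij)
        rw [hiso (E i) (E j), abs_of_nonpos (by linarith)]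
        ring
      have hstep : ∀ k ∈ Finset.Ico i j,
          dist (E.toEquiv k) (E.toEquiv (k + ⟨1, by omega⟩))
            = f (E (k + ⟨1, h1n⟩)) - f (E k) := by
        intro k hk
        have hk2 := Finset.mem_Ico.mp hk
        have hval : ((k + ⟨1, h1n⟩ : Fin n) : ℕ) = (k : ℕ) + 1 := by
          have h2 := hk2.2
          rw [Fin.lt_def] at h2
          have hj := j.isLt
          rw [Fin.add_def]
          show ((k : ℕ) + 1) % n = (k : ℕ) + 1
          exact Nat.mod_eq_of_lt (by omega)
        have hkle : k ≤ k + ⟨1, h1n⟩ := by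
          rw [Fin.le_def, hval]; omega
        exact hdd k _ hkle
      rw [Finset.sum_congr rfl hstep, fin_telescope h1n (fun k => f (E k)) i j hij]
      exact hdd i j hij
    · -- enumeration → TPC
      rintro ⟨e, he⟩
      set z : Fin n := ⟨0, by omega⟩ with hzdef
      have hdd : ∀ i j : Fin n, i ≤ j →
          dist (e i) (e j) = dist (e z) (e j) - dist (e z) (e i) := by
        intro i j hij
        have h0i : z ≤ i := by rw [Fin.le_def]; exact Nat.zero_le _
        have h0j : z ≤ j := le_trans h0i hij
        have hj := he z j h0j
        have hi := he z i h0i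
        have hij' := he i j hij
        rw [← Finset.Ico_union_Ico_eq_Ico h0i hij] at hj
        rw [@Finset.sum_union _ _ _ _ _ _ (fun a b => LinearOrder.toDecidableEq a b)
          (Finset.Ico_disjoint_Ico_consecutive z i j)] at hj
        rw [← hi, ← hij'] at hj
        linarith
      apply tpc_of_embedding (fun x => dist (e z) x)
      intro x y
      have key : ∀ x y : X, e.symm x ≤ e.symm y →
          dist x y = |dist (e z) x - dist (e z) y| := by
        intro x y hxy
        have h := hdd (e.symm x) (e.symm y) hxy
        rw [e.apply_symm_apply, e.apply_symm_apply] at h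
        rw [h, abs_of_nonpos (by linarith [dist_nonneg (x := x) (y := y)])]
        linarith
      rcases le_total (e.symm x) (e.symm y) with h | h
      · exact key x y h
      · rw [dist_comm, key y x h, abs_sub_comm]
  · -- endpoints are farthest
    intro e he u v
    set z : Fin n := ⟨0, by omega⟩ with hzdef
    set t : Fin n := ⟨n - 1, by omega⟩ with htdef
    have hzt : z ≤ t := by rw [Fin.le_def]; exact Nat.zero_le _
    have hmax : ∀ i j : Fin n, i ≤ j → dist (e i) (e j) ≤ dist (e z) (e t) := by
      intro i j hij
      rw [he i j hij, he z t hzt]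
      apply Finset.sum_le_sum_of_subset_of_nonneg
      · apply Finset.Ico_subset_Ico
        · rw [Fin.le_def]; exact Nat.zero_le _
        · rw [Fin.le_def]; have := j.isLt; simp only [htdef]; omega
      · intro _ _ _; exact dist_nonneg
    rcases le_total (e.symm u) (e.symm v) with h | h
    · have := hmax _ _ h
      rwa [e.apply_symm_apply, e.apply_symm_apply] at this
    · have := hmax _ _ h
      rw [e.apply_symm_apply, e.apply_symm_apply] at this
      rwa [dist_comm]
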